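/- The worst-case mean square regret of the rule δ_H* over the full two-dimensional parameter space is bounded by its worst-case regret over the hardest one-dimensional subproblem: sup_{(θ_e,θ_t)∈Θ} R_sq(δ_H*, θ_e, θ_t) ≤ σ²(a* + k/σ)² ρ(a*). -/

import Mathlib

open Real MeasureTheory

/-- The standard normal density. -/
noncomputable def gaussPdf (x : ℝ) : ℝ :=
  (Real.sqrt (2 * Real.pi))⁻¹ * Real.exp (-(x ^ 2) / 2)

/-- ρ(a) = ∫ (1/(exp(2ay)+1))² φ(y−a) dy. -/
noncomputable def ρ (a : ℝ) : ℝ :=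
  ∫ y : ℝ, (1 / (Real.exp (2 * a * y) + 1)) ^ 2 * gaussPdf (y - a)

/-- Mean square regret in the two-dimensional partially identified problem:
data X ~ N(θ_e, σ²), target effect θ_t. -/
noncomputable def Rsq (σ : ℝ) (δ : ℝ → ℝ) (θe θt : ℝ) : ℝ :=
  θt ^ 2 *
    ∫ x : ℝ, ((if 0 ≤ θt then (1 : ℝ) else 0) - δ x) ^ 2 *
      (σ⁻¹ * gaussPdf ((x - θe) / σ))

/-- The parameter space Θ = {(θ_e, θ_t) : θ_e − k ≤ θ_t ≤ θ_e + k}. -/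
def Θset (k : ℝ) : Set (ℝ × ℝ) := {p | p.1 - k ≤ p.2 ∧ p.2 ≤ p.1 + k}

namespace Stmt10

noncomputable def vf (a y : ℝ) : ℝ := (1 / (Real.exp (2 * a * y) + 1)) ^ 2

noncomputable def Bf (a s : ℝ) : ℝ := ∫ y : ℝ, vf a y * gaussPdf (y - s)

noncomputable def Af (a s : ℝ) : ℝ := ∫ y : ℝ, vf a y * ((y - s) * gaussPdf (y - s))

lemma rho_eq (a : ℝ) : ρ a = Bf a a := rfl

lemma sqrt2pi_pos : 0 < Real.sqrt (2 * Real.pi) :=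
  Real.sqrt_pos.2 (by positivity)

lemma gaussPdf_pos (x : ℝ) : 0 < gaussPdf x := by
  unfold gaussPdf; positivity

lemma gaussPdf_nonneg (x : ℝ) : 0 ≤ gaussPdf x := (gaussPdf_pos x).le

lemma gaussPdf_neg (x : ℝ) : gaussPdf (-x) = gaussPdf x := by
  unfold gaussPdf; ring_nf

lemma continuous_gaussPdf : Continuous gaussPdf := by
  unfold gaussPdf
  exact continuous_const.mul ((continuous_id.pow 2).neg.div_const 2).rexp

lemma exp_term_pos (a y : ℝ) : 0 < Real.exp (2 * a * y) + 1 := by positivity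

lemma vf_nonneg (a y : ℝ) : 0 ≤ vf a y := by unfold vf; positivity

lemma vf_le_one (a y : ℝ) : vf a y ≤ 1 := by
  unfold vf
  have h := exp_term_pos a y
  have h1 : 1 / (Real.exp (2 * a * y) + 1) ≤ 1 := by
    rw [div_le_one h]; nlinarith [Real.exp_pos (2 * a * y)]
  have h2 : (0:ℝ) ≤ 1 / (Real.exp (2 * a * y) + 1) := by positivity
  nlinarith

lemma continuous_vf (a : ℝ) : Continuous (vf a) := by
  unfold vf
  have : Continuous fun y : ℝ => Real.exp (2 * a * y) + 1 :=
    ((continuous_const.mul continuous_id).rexp).add continuous_const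
  exact (continuous_const.div this fun y => (exp_term_pos a y).ne').pow 2

lemma vf_antitone {a : ℝ} (ha : 0 ≤ a) : Antitone (vf a) := by
  intro y z hyz
  unfold vf
  have h1 : Real.exp (2 * a * y) + 1 ≤ Real.exp (2 * a * z) + 1 := by
    have := Real.exp_le_exp.2 (by nlinarith : 2 * a * y ≤ 2 * a * z)
    linarith
  have h2 : 0 < Real.exp (2 * a * y) + 1 := exp_term_pos a y
  have := one_div_le_one_div_of_le h2 h1
  have h3 : 0 ≤ 1 / (Real.exp (2 * a * z) + 1) := by positivity
  nlinarith [one_div_nonneg.2 h2.le]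



lemma gauss_eq (x : ℝ) : Real.exp (-(x ^ 2) / 2) = Real.exp (-(1/2 : ℝ) * x ^ 2) := by
  ring_nf

lemma integrable_exp_half : Integrable (fun x : ℝ => Real.exp (-(x ^ 2) / 2)) := by
  simp only [gauss_eq]
  exact integrable_exp_neg_mul_sq (by norm_num)

lemma integrable_gaussPdf : Integrable gaussPdf :=
  integrable_exp_half.const_mul _

lemma integral_gaussPdf : ∫ x : ℝ, gaussPdf x = 1 := by
  unfold gaussPdf
  rw [MeasureTheory.integral_const_mul]
  simp only [gauss_eq]
  rw [integral_gaussian]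
  rw [inv_mul_eq_one₀ (by positivity : Real.sqrt (2*Real.pi) ≠ 0)]
  rw [show ((2:ℝ)*Real.pi) = Real.pi/(1/2) by ring]

lemma integrable_gauss_shift (c : ℝ) : Integrable (fun y : ℝ => gaussPdf (y - c)) :=
  integrable_gaussPdf.comp_sub_right c

lemma integral_gauss_shift (c : ℝ) : ∫ y : ℝ, gaussPdf (y - c) = 1 := by
  have : ∫ y : ℝ, gaussPdf (y - c) = ∫ y : ℝ, gaussPdf y := by
    simpa [sub_eq_add_neg] using integral_add_right_eq_self gaussPdf (-c)
  rw [this, integral_gaussPdf]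

lemma integrable_abs_gauss : Integrable (fun y : ℝ => |y| * gaussPdf y) := by
  have h : Integrable (fun y : ℝ => y * gaussPdf y) := by
    unfold gaussPdf
    have := (integrable_mul_exp_neg_mul_sq (b := 1/2) (by norm_num)).const_mul
      ((Real.sqrt (2 * Real.pi))⁻¹)
    apply this.congr
    filter_upwards with x
    simp only [gauss_eq]; ring
  have := h.abs
  apply this.congr
  filter_upwards with x
  rw [abs_mul, abs_of_nonneg (by unfold gaussPdf; positivity : (0:ℝ) ≤ gaussPdf x)]

lemma integrable_abs_gauss_shift (c : ℝ) :
    Integrable (fun y : ℝ => |y - c| * gaussPdf (y - c)) :=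
  integrable_abs_gauss.comp_sub_right c

/-- Master integrable bound used for differentiation under the integral. -/
lemma integrable_master {M : ℝ} (hM : 0 ≤ M) :
    Integrable (fun y : ℝ => (|y| + M) * Real.exp (-(y ^ 2) / 2 + M * |y|)) := by
  have hshift : ∀ c : ℝ, Integrable (fun y : ℝ => Real.exp (-((y - c) ^ 2) / 2)) :=
    fun c => integrable_exp_half.comp_sub_right c
  set c := M + 1 with hc
  have hg : Integrable (fun y : ℝ =>
      (1 + M) * Real.exp (c ^ 2 / 2) *
        (Real.exp (-((y - c) ^ 2) / 2) + Real.exp (-((y + c) ^ 2) / 2))) := by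
    have h2 : Integrable (fun y : ℝ => Real.exp (-((y + c) ^ 2) / 2)) := by
      simpa [sub_eq_add_neg, sub_neg_eq_add] using hshift (-c)
    exact ((hshift c).add h2).const_mul _
  apply hg.mono'
  · apply Continuous.aestronglyMeasurable
    apply Continuous.mul
    · exact (continuous_abs.add continuous_const)
    · exact (((continuous_pow 2).neg.div_const 2).add
        ((continuous_const.mul continuous_abs))).rexp
  · filter_upwards with y
    have h0 : (0:ℝ) ≤ (|y| + M) * Real.exp (-(y ^ 2) / 2 + M * |y|) := by positivity
    rw [Real.norm_of_nonneg h0]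
    have step1 : |y| + M ≤ (1 + M) * Real.exp |y| := by
      have h1 : |y| ≤ Real.exp |y| := by
        have := Real.add_one_le_exp |y|; linarith
      have h2 : (1:ℝ) ≤ Real.exp |y| := Real.one_le_exp (abs_nonneg y)
      nlinarith
    have step2 : Real.exp |y| * Real.exp (-(y ^ 2) / 2 + M * |y|) =
        Real.exp (-(y ^ 2) / 2 + c * |y|) := by
      rw [← Real.exp_add, hc]; ring_nf
    have step3 : Real.exp (-(y ^ 2) / 2 + c * |y|) ≤
        Real.exp (c ^ 2 / 2) * (Real.exp (-((y - c) ^ 2) / 2) + Real.exp (-((y + c) ^ 2) / 2)) := by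
      rcases abs_cases y with ⟨hy, _⟩ | ⟨hy, _⟩
      · have he : -(y ^ 2) / 2 + c * |y| = c ^ 2 / 2 + (-((y - c) ^ 2) / 2) := by
          rw [hy]; ring
        rw [he, Real.exp_add]
        nlinarith [Real.exp_pos (-((y + c) ^ 2) / 2), Real.exp_pos (-((y - c) ^ 2) / 2),
          Real.exp_pos (c ^ 2 / 2)]
      · have he : -(y ^ 2) / 2 + c * |y| = c ^ 2 / 2 + (-((y + c) ^ 2) / 2) := by
          rw [hy]; ring
        rw [he, Real.exp_add]
        nlinarith [Real.exp_pos (-((y + c) ^ 2) / 2), Real.exp_pos (-((y - c) ^ 2) / 2),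
          Real.exp_pos (c ^ 2 / 2)]
    calc (|y| + M) * Real.exp (-(y ^ 2) / 2 + M * |y|)
        ≤ (1 + M) * Real.exp |y| * Real.exp (-(y ^ 2) / 2 + M * |y|) := by
          apply mul_le_mul_of_nonneg_right step1 (by positivity)
      _ = (1 + M) * Real.exp (-(y ^ 2) / 2 + c * |y|) := by
          rw [mul_assoc, step2]
      _ ≤ (1 + M) * Real.exp (c ^ 2 / 2) *
            (Real.exp (-((y - c) ^ 2) / 2) + Real.exp (-((y + c) ^ 2) / 2)) := by
          rw [mul_assoc]
          exact mul_le_mul_of_nonneg_left step3 (by linarith)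




/-- Integrability of `w y * gaussPdf (y - c)` for any `w` bounded by 1 in abs. -/
lemma integrable_wg {w : ℝ → ℝ} (hw : Continuous w) (hw1 : ∀ y, |w y| ≤ 1) (c : ℝ) :
    Integrable (fun y : ℝ => w y * gaussPdf (y - c)) := by
  apply (integrable_gauss_shift c).mono'
    ((hw.mul (continuous_gaussPdf.comp (continuous_id.sub continuous_const))).aestronglyMeasurable)
  filter_upwards with y
  simp only [Pi.mul_apply, Function.comp_apply, Pi.sub_apply, id]
  rw [Real.norm_eq_abs, abs_mul, abs_of_nonneg (gaussPdf_nonneg _)]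
  exact mul_le_of_le_one_left (gaussPdf_nonneg _) (hw1 y)

lemma abs_vf_le_one (a y : ℝ) : |vf a y| ≤ 1 := by
  rw [abs_of_nonneg (vf_nonneg a y)]; exact vf_le_one a y

lemma integrable_Bf (a s : ℝ) : Integrable (fun y : ℝ => vf a y * gaussPdf (y - s)) :=
  integrable_wg (continuous_vf a) (abs_vf_le_one a) s

lemma integrable_Af (a s : ℝ) :
    Integrable (fun y : ℝ => vf a y * ((y - s) * gaussPdf (y - s))) := by
  apply (integrable_abs_gauss_shift s).mono'
  · exact ((continuous_vf a).mul ((continuous_id.sub continuous_const).mul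
      (continuous_gaussPdf.comp (continuous_id.sub continuous_const)))).aestronglyMeasurable
  filter_upwards with y
  rw [Real.norm_eq_abs, abs_mul, abs_mul, abs_of_nonneg (gaussPdf_nonneg _)]
  exact mul_le_of_le_one_left (mul_nonneg (abs_nonneg _) (gaussPdf_nonneg _)) (abs_vf_le_one a y)

lemma Bf_z (a s : ℝ) : Bf a s = ∫ z : ℝ, vf a (z + s) * gaussPdf z := by
  unfold Bf
  rw [← integral_add_right_eq_self (fun y => vf a y * gaussPdf (y - s)) s]
  simp

lemma Af_z (a s : ℝ) : Af a s = ∫ z : ℝ, vf a (z + s) * (z * gaussPdf z) := by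
  unfold Af
  rw [← integral_add_right_eq_self (fun y => vf a y * ((y - s) * gaussPdf (y - s))) s]
  simp

lemma integrable_Bf_z (a s : ℝ) : Integrable (fun z : ℝ => vf a (z + s) * gaussPdf z) := by
  have := (integrable_Bf a s).comp_add_right s
  apply this.congr
  filter_upwards with z
  simp

lemma integrable_Af_z (a s : ℝ) : Integrable (fun z : ℝ => vf a (z + s) * (z * gaussPdf z)) := by
  have := (integrable_Af a s).comp_add_right s
  apply this.congr
  filter_upwards with z
  simp

lemma Bf_pos (a s : ℝ) : 0 < Bf a s := by
  rw [Bf_z]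
  rw [integral_pos_iff_support_of_nonneg]
  · have : Function.support (fun z : ℝ => vf a (z + s) * gaussPdf z) = Set.univ := by
      ext z; simp only [Function.mem_support, Set.mem_univ, iff_true]
      have h1 : 0 < vf a (z + s) := by unfold vf; positivity
      exact (mul_pos h1 (gaussPdf_pos z)).ne'
    rw [this]
    simp
  · intro z
    exact mul_nonneg (vf_nonneg _ _) (gaussPdf_nonneg _)
  · exact integrable_Bf_z a s

lemma Bf_nonneg (a s : ℝ) : 0 ≤ Bf a s := (Bf_pos a s).le

lemma Bf_mono {a : ℝ} (ha : 0 ≤ a) {s s' : ℝ} (h : s ≤ s') : Bf a s' ≤ Bf a s := by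
  rw [Bf_z, Bf_z]
  apply integral_mono (integrable_Bf_z a s') (integrable_Bf_z a s)
  intro z
  exact mul_le_mul_of_nonneg_right (vf_antitone ha (by linarith)) (gaussPdf_nonneg z)




lemma hasDerivAt_gauss_shift (y x : ℝ) :
    HasDerivAt (fun x => gaussPdf (y - x)) ((y - x) * gaussPdf (y - x)) x := by
  have h1 : HasDerivAt (fun x : ℝ => y - x) (-1) x := (hasDerivAt_id x).const_sub y
  have h2 : ∀ u : ℝ, HasDerivAt (fun u : ℝ => gaussPdf u) (-u * gaussPdf u) u := by
    intro u
    unfold gaussPdf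
    have hp : HasDerivAt (fun u : ℝ => -(u ^ 2) / 2) (-u) u := by
      have := ((hasDerivAt_pow 2 u).neg).div_const 2
      simpa using this.congr_deriv (by ring)
    have := (hp.exp).const_mul ((Real.sqrt (2 * Real.pi))⁻¹)
    exact this.congr_deriv (by ring)
  have := (h2 (y - x)).comp x h1
  exact this.congr_deriv (by ring)

/-- The key bound: for `x` in a ball of radius 1 around `s`, the derivative integrand
is dominated. -/
lemma gauss_dom {x s y : ℝ} (hx : |x| ≤ |s| + 1) :
    gaussPdf (y - x) ≤ (Real.sqrt (2 * Real.pi))⁻¹ *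
      Real.exp (-(y ^ 2) / 2 + (|s| + 1) * |y|) := by
  unfold gaussPdf
  apply mul_le_mul_of_nonneg_left _ (by positivity)
  apply Real.exp_le_exp.2
  have h1 : x * y ≤ (|s| + 1) * |y| := by
    calc x * y ≤ |x * y| := le_abs_self _
      _ = |x| * |y| := abs_mul x y
      _ ≤ (|s| + 1) * |y| := mul_le_mul_of_nonneg_right hx (abs_nonneg y)
  nlinarith [sq_nonneg x]

lemma hasDerivAt_Bf (a s : ℝ) : HasDerivAt (fun s => Bf a s) (Af a s) s := by
  unfold Bf Af
  have key := hasDerivAt_integral_of_dominated_loc_of_deriv_le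
    (F := fun x (y : ℝ) => vf a y * gaussPdf (y - x))
    (F' := fun x (y : ℝ) => vf a y * ((y - x) * gaussPdf (y - x)))
    (x₀ := s)
    (bound := fun y => (Real.sqrt (2 * Real.pi))⁻¹ *
      ((|y| + (|s| + 1)) * Real.exp (-(y ^ 2) / 2 + (|s| + 1) * |y|)))
    (Metric.ball_mem_nhds _ one_pos)
    ?_ (integrable_Bf a s) ?_ ?_ ?_ ?_
  · exact key.2
  · filter_upwards with x
    exact ((continuous_vf a).mul (continuous_gaussPdf.comp
      (continuous_id.sub continuous_const))).aestronglyMeasurable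
  · exact (integrable_Af a s).aestronglyMeasurable
  · filter_upwards with y
    intro x hx
    have hxb : |x| ≤ |s| + 1 := by
      have := mem_ball_iff_norm.1 hx
      rw [Real.norm_eq_abs] at this
      calc |x| = |x - s + s| := by ring_nf
        _ ≤ |x - s| + |s| := abs_add_le _ _
        _ ≤ |s| + 1 := by linarith
    rw [Real.norm_eq_abs, abs_mul, abs_mul, abs_of_nonneg (gaussPdf_nonneg _)]
    calc |vf a y| * (|y - x| * gaussPdf (y - x))
        ≤ 1 * (|y - x| * gaussPdf (y - x)) := by
          apply mul_le_mul_of_nonneg_right (abs_vf_le_one a y)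
            (mul_nonneg (abs_nonneg _) (gaussPdf_nonneg _))
      _ = |y - x| * gaussPdf (y - x) := by ring
      _ ≤ (|y| + (|s| + 1)) * ((Real.sqrt (2 * Real.pi))⁻¹ *
            Real.exp (-(y ^ 2) / 2 + (|s| + 1) * |y|)) := by
          apply mul_le_mul
          · calc |y - x| ≤ |y| + |x| := abs_sub _ _
              _ ≤ |y| + (|s| + 1) := by linarith
          · exact gauss_dom hxb
          · exact gaussPdf_nonneg _
          · positivity
      _ = (Real.sqrt (2 * Real.pi))⁻¹ *
            ((|y| + (|s| + 1)) * Real.exp (-(y ^ 2) / 2 + (|s| + 1) * |y|)) := by ring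
  · exact (integrable_master (by positivity : (0:ℝ) ≤ |s| + 1)).const_mul _
  · filter_upwards with y
    intro x hx
    exact (hasDerivAt_gauss_shift y x).const_mul (vf a y)



noncomputable def vfd (x y : ℝ) : ℝ :=
  -(4 * y * Real.exp (2 * x * y)) / (Real.exp (2 * x * y) + 1) ^ 3

lemma hasDerivAt_vf (x y : ℝ) : HasDerivAt (fun t => vf t y) (vfd x y) x := by
  have hlin : HasDerivAt (fun t : ℝ => 2 * t * y) (2 * y) x := by
    simpa using ((hasDerivAt_id x).const_mul 2).mul_const y
  have hexp := hlin.exp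
  have hadd := hexp.add_const 1
  have hne : Real.exp (2 * x * y) + 1 ≠ 0 := (exp_term_pos x y).ne'
  have hinv := hadd.inv hne
  have hpow := hinv.pow 2
  have : HasDerivAt (fun t => ((Real.exp (2 * t * y) + 1)⁻¹) ^ 2) (vfd x y) x := by
    apply hpow.congr_deriv
    unfold vfd
    simp only [Pi.inv_apply, Nat.cast_ofNat]
    norm_num
    field_simp
    ring
  apply this.congr_of_eventuallyEq
  filter_upwards with t
  unfold vf
  rw [one_div]

lemma abs_vfd_le (x y : ℝ) : |vfd x y| ≤ 4 * |y| := by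
  unfold vfd
  have hE : 0 < Real.exp (2 * x * y) := Real.exp_pos _
  have h1 : 0 < (Real.exp (2 * x * y) + 1) ^ 3 := by positivity
  rw [abs_div, abs_of_pos h1, abs_neg, abs_mul, abs_mul, abs_of_pos hE]
  rw [div_le_iff₀ h1]
  have h2 : Real.exp (2 * x * y) ≤ (Real.exp (2 * x * y) + 1) ^ 3 := by
    nlinarith [sq_nonneg (Real.exp (2 * x * y)), sq_nonneg (Real.exp (2 * x * y) + 1), hE]
  have : |(4:ℝ)| = 4 := by norm_num
  rw [this]
  nlinarith [abs_nonneg y]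

noncomputable def rhod (x : ℝ) : ℝ :=
  ∫ y : ℝ, (vfd x y * gaussPdf (y - x) + vf x y * ((y - x) * gaussPdf (y - x)))

lemma hasDerivAt_rho (x : ℝ) : HasDerivAt ρ (rhod x) x := by
  have hrho : ρ = fun t => ∫ y : ℝ, vf t y * gaussPdf (y - t) := rfl
  rw [hrho]
  unfold rhod
  have key := hasDerivAt_integral_of_dominated_loc_of_deriv_le
    (F := fun t (y : ℝ) => vf t y * gaussPdf (y - t))
    (F' := fun t (y : ℝ) => vfd t y * gaussPdf (y - t) + vf t y * ((y - t) * gaussPdf (y - t)))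
    (x₀ := x)
    (bound := fun y => 5 * (Real.sqrt (2 * Real.pi))⁻¹ *
      ((|y| + (|x| + 1)) * Real.exp (-(y ^ 2) / 2 + (|x| + 1) * |y|)))
    (Metric.ball_mem_nhds _ one_pos)
    ?_ (integrable_Bf x x) ?_ ?_ ?_ ?_
  · exact key.2
  · filter_upwards with t
    exact ((continuous_vf t).mul (continuous_gaussPdf.comp
      (continuous_id.sub continuous_const))).aestronglyMeasurable
  · apply Continuous.aestronglyMeasurable
    have hc1 : Continuous (fun y : ℝ => vfd x y) := by
      unfold vfd
      apply Continuous.div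
      · exact (continuous_const.mul continuous_id).mul
          ((continuous_const.mul continuous_id).rexp) |>.neg
      · exact (((continuous_const.mul continuous_id).rexp).add continuous_const).pow 3
      · intro y; positivity
    apply Continuous.add
    · exact hc1.mul (continuous_gaussPdf.comp (continuous_id.sub continuous_const))
    · exact (continuous_vf x).mul ((continuous_id.sub continuous_const).mul
        (continuous_gaussPdf.comp (continuous_id.sub continuous_const)))
  · filter_upwards with y
    intro t ht
    have htb : |t| ≤ |x| + 1 := by
      have := mem_ball_iff_norm.1 ht
      rw [Real.norm_eq_abs] at this
      calc |t| = |t - x + x| := by ring_nf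
        _ ≤ |t - x| + |x| := abs_add_le _ _
        _ ≤ |x| + 1 := by linarith
    have hg := gauss_dom (s := x) (y := y) htb
    have hgn := gaussPdf_nonneg (y - t)
    have h1 : |vfd t y * gaussPdf (y - t)| ≤ 4 * |y| * gaussPdf (y - t) := by
      rw [abs_mul, abs_of_nonneg hgn]
      exact mul_le_mul_of_nonneg_right (abs_vfd_le t y) hgn
    have h2 : |vf t y * ((y - t) * gaussPdf (y - t))| ≤ (|y| + (|x| + 1)) * gaussPdf (y - t) := by
      rw [abs_mul, abs_mul, abs_of_nonneg hgn]
      calc |vf t y| * (|y - t| * gaussPdf (y - t))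
          ≤ 1 * (|y - t| * gaussPdf (y - t)) :=
            mul_le_mul_of_nonneg_right (abs_vf_le_one t y)
              (mul_nonneg (abs_nonneg _) hgn)
        _ = |y - t| * gaussPdf (y - t) := by ring
        _ ≤ (|y| + (|x| + 1)) * gaussPdf (y - t) := by
            apply mul_le_mul_of_nonneg_right _ hgn
            calc |y - t| ≤ |y| + |t| := abs_sub _ _
              _ ≤ |y| + (|x| + 1) := by linarith
    rw [Real.norm_eq_abs]
    calc |vfd t y * gaussPdf (y - t) + vf t y * ((y - t) * gaussPdf (y - t))|
        ≤ |vfd t y * gaussPdf (y - t)| + |vf t y * ((y - t) * gaussPdf (y - t))| := abs_add_le _ _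
      _ ≤ 4 * |y| * gaussPdf (y - t) + (|y| + (|x| + 1)) * gaussPdf (y - t) := by
          linarith
      _ ≤ 5 * (|y| + (|x| + 1)) * gaussPdf (y - t) := by
          nlinarith [abs_nonneg y, abs_nonneg x, hgn]
      _ ≤ 5 * (|y| + (|x| + 1)) * ((Real.sqrt (2 * Real.pi))⁻¹ *
            Real.exp (-(y ^ 2) / 2 + (|x| + 1) * |y|)) := by
          apply mul_le_mul_of_nonneg_left hg (by positivity)
      _ = 5 * (Real.sqrt (2 * Real.pi))⁻¹ *
            ((|y| + (|x| + 1)) * Real.exp (-(y ^ 2) / 2 + (|x| + 1) * |y|)) := by ring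
  · exact (integrable_master (by positivity : (0:ℝ) ≤ |x| + 1)).const_mul _
  · filter_upwards with y
    intro t ht
    exact (hasDerivAt_vf t y).mul (hasDerivAt_gauss_shift y t)




noncomputable def hfun (a y : ℝ) : ℝ := 1 / (Real.exp (2 * a * y) + 1)

lemma vf_eq_hfun_sq (a y : ℝ) : vf a y = (hfun a y) ^ 2 := rfl

lemma hfun_neg (a y : ℝ) : hfun a (-y) = 1 - hfun a y := by
  unfold hfun
  have h1 : Real.exp (2 * a * y) + 1 ≠ 0 := (exp_term_pos a y).ne'
  have h2 : Real.exp (2 * a * -y) = (Real.exp (2 * a * y))⁻¹ := by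
    rw [← Real.exp_neg]; congr 1; ring
  rw [h2]
  have h3 : (0:ℝ) < Real.exp (2 * a * y) := Real.exp_pos _
  field_simp
  ring

lemma hfun_bdd (a y : ℝ) : 0 < hfun a y ∧ hfun a y < 1 := by
  unfold hfun
  constructor
  · positivity
  · rw [div_lt_one (exp_term_pos a y)]
    nlinarith [Real.exp_pos (2 * a * y)]

lemma one_sub_hfun_sq_le (a y : ℝ) : |(1 - hfun a y) ^ 2| ≤ 1 := by
  obtain ⟨h1, h2⟩ := hfun_bdd a y
  rw [abs_of_nonneg (sq_nonneg _)]
  nlinarith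

lemma continuous_hfun (a : ℝ) : Continuous (hfun a) := by
  unfold hfun
  exact continuous_const.div (((continuous_const.mul continuous_id).rexp).add continuous_const)
    fun y => (exp_term_pos a y).ne'

lemma integrable_sym (a x : ℝ) :
    Integrable (fun y : ℝ => (1 - hfun a y) ^ 2 * gaussPdf (y + x)) := by
  have := integrable_wg (w := fun y => (1 - hfun a y) ^ 2)
    (((continuous_const.sub (continuous_hfun a)).pow 2)) (one_sub_hfun_sq_le a) (-x)
  apply this.congr
  filter_upwards with y
  rw [sub_neg_eq_add]

/-- Symmetrized representation of `Bf`. -/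
lemma Bf_sym (a x : ℝ) :
    Bf a x = ∫ y : ℝ, (1 - hfun a y) ^ 2 * gaussPdf (y + x) := by
  unfold Bf
  rw [← integral_neg_eq_self (fun y : ℝ => vf a y * gaussPdf (y - x)) volume]
  congr 1
  ext y
  rw [vf_eq_hfun_sq, hfun_neg]
  congr 1
  rw [show -y - x = -(y + x) by ring, gaussPdf_neg]

lemma Bf_half (a x : ℝ) :
    Bf a x = ∫ y : ℝ,
      ((hfun a y) ^ 2 * gaussPdf (y - x) + (1 - hfun a y) ^ 2 * gaussPdf (y + x)) / 2 := by
  have h1 : Bf a x = (Bf a x + Bf a x) / 2 := by ring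
  have h2 : Bf a x + Bf a x = (∫ y : ℝ, vf a y * gaussPdf (y - x)) +
      ∫ y : ℝ, (1 - hfun a y) ^ 2 * gaussPdf (y + x) := by
    nth_rewrite 2 [Bf_sym]
    rfl
  rw [h1, h2, ← integral_add (integrable_Bf a x) (integrable_sym a x), ← integral_div]
  rfl

lemma integrable_half (a x : ℝ) : Integrable (fun y : ℝ =>
    ((hfun a y) ^ 2 * gaussPdf (y - x) + (1 - hfun a y) ^ 2 * gaussPdf (y + x)) / 2) := by
  have h := (integrable_Bf a x).add (integrable_sym a x)
  exact h.div_const 2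

lemma gauss_ratio (x y : ℝ) :
    gaussPdf (y - x) = Real.exp (2 * x * y) * gaussPdf (y + x) := by
  unfold gaussPdf
  rw [mul_comm (Real.exp (2 * x * y)), mul_assoc, ← Real.exp_add]
  congr 2
  ring

lemma hfun_bayes (x y : ℝ) :
    hfun x y = gaussPdf (y + x) / (gaussPdf (y - x) + gaussPdf (y + x)) := by
  rw [gauss_ratio]
  unfold hfun
  have hq : 0 < gaussPdf (y + x) := gaussPdf_pos _
  have hE : 0 < Real.exp (2 * x * y) := Real.exp_pos _
  rw [show Real.exp (2 * x * y) * gaussPdf (y + x) + gaussPdf (y + x)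
      = (Real.exp (2 * x * y) + 1) * gaussPdf (y + x) by ring]
  rw [div_mul_eq_div_div_swap, div_self hq.ne']
  
lemma quad_min {p q w : ℝ} (hp : 0 < p) (hq : 0 < q) (hw : w = q / (p + q)) (u : ℝ) :
    w ^ 2 * p + (1 - w) ^ 2 * q ≤ u ^ 2 * p + (1 - u) ^ 2 * q := by
  have hpq : 0 < p + q := by linarith
  have h : w ^ 2 * p + (1 - w) ^ 2 * q = p * q / (p + q) := by
    rw [hw]; field_simp; ring
  rw [h, div_le_iff₀ hpq]
  nlinarith [sq_nonneg ((p + q) * u - q)]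

/-- The Bayes-optimality comparison: ρ(x) ≤ I_a(x). -/
lemma rho_le_Bf (a x : ℝ) : ρ x ≤ Bf a x := by
  rw [rho_eq, Bf_half x x, Bf_half a x]
  apply integral_mono (integrable_half x x) (integrable_half a x)
  intro y
  have key := quad_min (gaussPdf_pos (y - x)) (gaussPdf_pos (y + x))
    (hfun_bayes x y) (hfun a y)
  simp only
  linarith




lemma v_quad {a : ℝ} (ha : 0 ≤ a) {s' s z w : ℝ} (hss : s' ≤ s) (hzw : w ≤ z) :
    vf a (z + s) * vf a (w + s') ≤ vf a (z + s') * vf a (w + s) := by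
  have split : ∀ u u' : ℝ, vf a (u + u') =
      (1 / (Real.exp (2 * a * u) * Real.exp (2 * a * u') + 1)) ^ 2 := by
    intro u u'
    unfold vf
    rw [← Real.exp_add]
    congr 3
    ring
  rw [split, split, split, split]
  set X := Real.exp (2 * a * z) with hX
  set Y := Real.exp (2 * a * w) with hY
  set U := Real.exp (2 * a * s) with hU
  set V := Real.exp (2 * a * s') with hV
  have hXpos : 0 < X := Real.exp_pos _
  have hYpos : 0 < Y := Real.exp_pos _
  have hUpos : 0 < U := Real.exp_pos _
  have hVpos : 0 < V := Real.exp_pos _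
  have hXY : Y ≤ X := Real.exp_le_exp.2 (by nlinarith)
  have hUV : V ≤ U := Real.exp_le_exp.2 (by nlinarith)
  have hcomb : ∀ c d : ℝ, (1/(c+1))^2 * (1/(d+1))^2 = (1/((c+1)*(d+1)))^2 := by
    intro c d
    rw [← mul_pow, div_mul_div_comm, one_mul]
  rw [hcomb, hcomb]
  apply pow_le_pow_left₀ (by positivity)
  apply one_div_le_one_div_of_le (by positivity)
  nlinarith [mul_nonneg (sub_nonneg.2 hXY) (sub_nonneg.2 hUV)]

lemma ratio_mono {a : ℝ} (ha : 0 ≤ a) {s' s : ℝ} (hss : s' ≤ s) :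
    Af a s * Bf a s' ≤ Af a s' * Bf a s := by
  rw [Af_z, Af_z, Bf_z, Bf_z]
  set F1 : ℝ → ℝ := fun z => vf a (z + s) * (z * gaussPdf z) with hF1
  set G1 : ℝ → ℝ := fun w => vf a (w + s') * gaussPdf w with hG1
  set F2 : ℝ → ℝ := fun z => vf a (z + s') * (z * gaussPdf z) with hF2
  set G2 : ℝ → ℝ := fun w => vf a (w + s) * gaussPdf w with hG2
  have iF1 : Integrable F1 := integrable_Af_z a s
  have iG1 : Integrable G1 := integrable_Bf_z a s'
  have iF2 : Integrable F2 := integrable_Af_z a s'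
  have iG2 : Integrable G2 := integrable_Bf_z a s
  have i1 : Integrable (fun p : ℝ × ℝ => F2 p.1 * G2 p.2) := by
    rw [Measure.volume_eq_prod]; exact iF2.mul_prod iG2
  have i2 : Integrable (fun p : ℝ × ℝ => F1 p.1 * G1 p.2) := by
    rw [Measure.volume_eq_prod]; exact iF1.mul_prod iG1
  have i3 : Integrable (fun p : ℝ × ℝ => G2 p.1 * F2 p.2) := by
    rw [Measure.volume_eq_prod]; exact iG2.mul_prod iF2
  have i4 : Integrable (fun p : ℝ × ℝ => G1 p.1 * F1 p.2) := by
    rw [Measure.volume_eq_prod]; exact iG1.mul_prod iF1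
  have e1 : ∫ p : ℝ × ℝ, F2 p.1 * G2 p.2 = (∫ z, F2 z) * ∫ w, G2 w := by
    rw [Measure.volume_eq_prod]; exact integral_prod_mul F2 G2
  have e2 : ∫ p : ℝ × ℝ, F1 p.1 * G1 p.2 = (∫ z, F1 z) * ∫ w, G1 w := by
    rw [Measure.volume_eq_prod]; exact integral_prod_mul F1 G1
  have e3 : ∫ p : ℝ × ℝ, G2 p.1 * F2 p.2 = (∫ w, G2 w) * ∫ z, F2 z := by
    rw [Measure.volume_eq_prod]; exact integral_prod_mul G2 F2
  have e4 : ∫ p : ℝ × ℝ, G1 p.1 * F1 p.2 = (∫ w, G1 w) * ∫ z, F1 z := by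
    rw [Measure.volume_eq_prod]; exact integral_prod_mul G1 F1
  have hS : 0 ≤ ∫ p : ℝ × ℝ,
      ((F2 p.1 * G2 p.2 - F1 p.1 * G1 p.2) + (G2 p.1 * F2 p.2 - G1 p.1 * F1 p.2)) := by
    apply integral_nonneg
    intro p
    obtain ⟨z, w⟩ := p
    have expand : F2 z * G2 w - F1 z * G1 w + (G2 z * F2 w - G1 z * F1 w) =
        (z - w) * (vf a (z + s') * vf a (w + s) - vf a (z + s) * vf a (w + s')) *
          (gaussPdf z * gaussPdf w) := by
      simp only [hF1, hF2, hG1, hG2]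
      ring
    show (0:ℝ) ≤ F2 z * G2 w - F1 z * G1 w + (G2 z * F2 w - G1 z * F1 w)
    rw [expand]
    rcases le_total w z with hzw | hwz
    · have hA := v_quad ha hss hzw
      apply mul_nonneg (mul_nonneg (by linarith) (by linarith))
        (mul_nonneg (gaussPdf_nonneg z) (gaussPdf_nonneg w))
    · have hA := v_quad ha hss hwz
      apply mul_nonneg ((by nlinarith [hA] : (0:ℝ) ≤ (z - w) * (vf a (z + s') * vf a (w + s) - vf a (z + s) * vf a (w + s'))))
        (mul_nonneg (gaussPdf_nonneg z) (gaussPdf_nonneg w))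
  have i12 : Integrable (fun p : ℝ × ℝ => F2 p.1 * G2 p.2 - F1 p.1 * G1 p.2) := i1.sub i2
  have i34 : Integrable (fun p : ℝ × ℝ => G2 p.1 * F2 p.2 - G1 p.1 * F1 p.2) := i3.sub i4
  rw [integral_add i12 i34, integral_sub i1 i2, integral_sub i3 i4,
    e1, e2, e3, e4] at hS
  nlinarith [hS]




section G
variable {a κ : ℝ}

lemma hasDerivAt_G (a κ : ℝ) (s : ℝ) :
    HasDerivAt (fun s => (s + κ) ^ 2 * Bf a s)
      (2 * (s + κ) * Bf a s + (s + κ) ^ 2 * Af a s) s := by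
  have h1 : HasDerivAt (fun s : ℝ => (s + κ) ^ 2) (2 * (s + κ)) s := by
    have := ((hasDerivAt_id s).add_const κ).pow 2
    exact this.congr_deriv (by simp)
  exact (h1.mul (hasDerivAt_Bf a s)).congr_deriv (by ring)

lemma Af_a_neg (ha : 0 < a) (hκ : 0 < κ)
    (hd0 : 2 * Bf a a + (a + κ) * Af a a = 0) : Af a a < 0 := by
  have hP := Bf_pos a a
  nlinarith

lemma sign_hi (ha : 0 < a) (hκ : 0 < κ)
    (hd0 : 2 * Bf a a + (a + κ) * Af a a = 0) {s : ℝ} (hs : a ≤ s) :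
    2 * Bf a s + (s + κ) * Af a s ≤ 0 := by
  have hP := Bf_pos a a
  have hQ := Bf_pos a s
  have hX := Af_a_neg ha hκ hd0
  have hr := ratio_mono ha.le hs
  have hY : Af a s < 0 := by nlinarith
  have goal1 : 2 * Bf a s + (a + κ) * Af a s ≤ 0 := by nlinarith
  nlinarith

lemma sign_lo (ha : 0 < a) (hκ : 0 < κ)
    (hd0 : 2 * Bf a a + (a + κ) * Af a a = 0) {s : ℝ} (hs1 : -κ < s) (hs2 : s ≤ a) :
    0 ≤ 2 * Bf a s + (s + κ) * Af a s := by
  have hP := Bf_pos a a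
  have hQ := Bf_pos a s
  have hX := Af_a_neg ha hκ hd0
  have hr := ratio_mono ha.le hs2
  have hsk : (0:ℝ) < s + κ := by linarith
  have h1 : (s + κ) * (Af a a * Bf a s) ≤ (s + κ) * (Af a s * Bf a a) :=
    mul_le_mul_of_nonneg_left hr hsk.le
  have h2 : 0 ≤ (s - a) * Af a a * Bf a s := by
    nlinarith [mul_nonneg (mul_nonneg (by linarith : (0:ℝ) ≤ a - s)
      (by linarith : (0:ℝ) ≤ -(Af a a))) hQ.le]
  have h3 : Bf a s * (2 * Bf a a + (a + κ) * Af a a) = 0 := by rw [hd0, mul_zero]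
  nlinarith [h1, h2, h3, hP, hQ]

lemma Gmax (ha : 0 < a) (hκ : 0 < κ)
    (hd0 : 2 * Bf a a + (a + κ) * Af a a = 0) {s : ℝ} (hs : -κ < s) :
    (s + κ) ^ 2 * Bf a s ≤ (a + κ) ^ 2 * Bf a a := by
  set G : ℝ → ℝ := fun s => (s + κ) ^ 2 * Bf a s with hG
  have hdiff : ∀ x : ℝ, DifferentiableAt ℝ G x :=
    fun x => (hasDerivAt_G a κ x).differentiableAt
  have hderiv : ∀ x : ℝ, deriv G x = 2 * (x + κ) * Bf a x + (x + κ) ^ 2 * Af a x :=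
    fun x => (hasDerivAt_G a κ x).deriv
  rcases le_total s a with hsa | has
  · have hmono : MonotoneOn G (Set.Icc s a) := by
      apply monotoneOn_of_deriv_nonneg (convex_Icc s a)
      · exact (Differentiable.continuous fun x => hdiff x).continuousOn
      · exact fun x _ => (hdiff x).differentiableWithinAt
      · intro x hx
        rw [interior_Icc] at hx
        rw [hderiv x]
        have h1 : 0 ≤ 2 * Bf a x + (x + κ) * Af a x :=
          sign_lo ha hκ hd0 (by linarith [hx.1]) (le_of_lt hx.2)
        have h2 : (0:ℝ) < x + κ := by linarith [hx.1]
        nlinarith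
    exact hmono (Set.left_mem_Icc.2 hsa) (Set.right_mem_Icc.2 hsa) hsa
  · have hanti : AntitoneOn G (Set.Ici a) := by
      apply antitoneOn_of_deriv_nonpos (convex_Ici a)
      · exact (Differentiable.continuous fun x => hdiff x).continuousOn
      · exact fun x _ => (hdiff x).differentiableWithinAt
      · intro x hx
        rw [interior_Ici] at hx
        rw [hderiv x]
        have hx' : a < x := hx
        have h1 : 2 * Bf a x + (x + κ) * Af a x ≤ 0 := sign_hi ha hκ hd0 (le_of_lt hx')
        have h2 : (0:ℝ) < x + κ := by linarith
        nlinarith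
    exact hanti (Set.mem_Ici.2 le_rfl) (Set.mem_Ici.2 has) has

end G



lemma hasDerivAt_f (κ x : ℝ) :
    HasDerivAt (fun x => (x + κ) ^ 2 * ρ x) (2 * (x + κ) * ρ x + (x + κ) ^ 2 * rhod x) x := by
  have h1 : HasDerivAt (fun x : ℝ => (x + κ) ^ 2) (2 * (x + κ)) x := by
    have := ((hasDerivAt_id x).add_const κ).pow 2
    exact this.congr_deriv (by simp)
  exact (h1.mul (hasDerivAt_rho x)).congr_deriv (by ring)

/-- Tangency: since ρ ≤ Bf a · with equality at a, the derivatives agree. -/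
lemma tangency (a : ℝ) : rhod a = Af a a := by
  have hg : HasDerivAt (fun x => Bf a x - ρ x) (Af a a - rhod a) a :=
    (hasDerivAt_Bf a a).sub (hasDerivAt_rho a)
  have hmin : IsLocalMin (fun x => Bf a x - ρ x) a := by
    apply Filter.Eventually.of_forall
    intro x
    have h1 := rho_le_Bf a x
    have h2 := rho_eq a
    simp only
    linarith
  have := hmin.deriv_eq_zero
  rw [hg.deriv] at this
  linarith

lemma foc {κ τstar astar : ℝ} (hκ : 0 < κ) (hτ0 : 0 ≤ τstar)
    (hτmax : ∀ τ : ℝ, 0 ≤ τ → τ ^ 2 * ρ τ ≤ τstar ^ 2 * ρ τstar)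
    (ha : astar ∈ Set.Icc 0 τstar)
    (hamax : ∀ x ∈ Set.Icc 0 τstar, (x + κ) ^ 2 * ρ x ≤ (astar + κ) ^ 2 * ρ astar)
    (hapos : 0 < astar) :
    2 * Bf astar astar + (astar + κ) * Af astar astar = 0 := by
  rcases lt_or_eq_of_le ha.2 with hlt | heq
  · -- interior case
    have hmax : IsLocalMax (fun x => (x + κ) ^ 2 * ρ x) astar := by
      have hnb : Set.Ioo (0:ℝ) τstar ∈ nhds astar :=
        (isOpen_Ioo).mem_nhds ⟨hapos, hlt⟩
      filter_upwards [hnb] with x hx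
      exact hamax x ⟨hx.1.le, hx.2.le⟩
    have hz := hmax.deriv_eq_zero
    rw [(hasDerivAt_f κ astar).deriv] at hz
    rw [tangency astar, rho_eq astar] at hz
    have hak : (0:ℝ) < astar + κ := by linarith
    have : (astar + κ) * (2 * Bf astar astar + (astar + κ) * Af astar astar) = 0 := by
      rw [← hz]; ring
    rcases mul_eq_zero.1 this with h | h
    · exact absurd h hak.ne'
    · exact h
  · -- boundary case astar = τstar: contradiction
    exfalso
    subst heq
    set τ := astar with hτ
    have hρpos : 0 < ρ τ := by rw [rho_eq]; exact Bf_pos τ τ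
    have hmax2 : IsLocalMax (fun x => x ^ 2 * ρ x) τ := by
      have hnb : Set.Ioi (0:ℝ) ∈ nhds τ := (isOpen_Ioi).mem_nhds hapos
      filter_upwards [hnb] with x hx
      have := hτmax x (le_of_lt hx)
      simpa using this
    have hg2 : HasDerivAt (fun x => x ^ 2 * ρ x) (2 * τ * ρ τ + τ ^ 2 * rhod τ) τ := by
      have h1 : HasDerivAt (fun x : ℝ => x ^ 2) (2 * τ) τ := by
        exact ((hasDerivAt_id τ).pow 2).congr_deriv (by simp)
      exact (h1.mul (hasDerivAt_rho τ)).congr_deriv (by ring)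
    have e1 : 2 * τ * ρ τ + τ ^ 2 * rhod τ = 0 := by
      have := hmax2.deriv_eq_zero
      rw [hg2.deriv] at this
      exact this
    -- f'(τ) < 0
    have hcneg : 2 * (τ + κ) * ρ τ + (τ + κ) ^ 2 * rhod τ < 0 := by
      have hrd : rhod τ * τ ^ 2 = -(2 * τ * ρ τ) := by linarith
      have hτκ : (0:ℝ) < τ + κ := by linarith
      nlinarith [mul_pos hapos hκ, mul_pos hρpos hapos, mul_pos (mul_pos hρpos hapos) hκ,
        mul_pos hτκ hapos, sq_nonneg τ, mul_pos (mul_pos hτκ hρpos) (mul_pos hapos hκ)]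
    -- but astar = τ is a max of f on [0, τ], so left slopes are ≥ 0
    have htendsto : Filter.Tendsto (slope (fun x => (x + κ) ^ 2 * ρ x) τ)
        (nhdsWithin τ (Set.Iio τ)) (nhds (2 * (τ + κ) * ρ τ + (τ + κ) ^ 2 * rhod τ)) := by
      have := hasDerivAt_iff_tendsto_slope.1 (hasDerivAt_f κ τ)
      exact this.mono_left (nhdsWithin_mono τ (fun x hx => ne_of_lt hx))
    have hev1 := htendsto.eventually_lt_const hcneg
    have hev2 : ∀ᶠ x in nhdsWithin τ (Set.Iio τ), x ∈ Set.Ioo (0:ℝ) τ := by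
      have : Set.Ioo (0:ℝ) τ ∈ nhdsWithin τ (Set.Iio τ) :=
        Ioo_mem_nhdsLT_of_mem ⟨hapos, le_rfl⟩
      exact this
    obtain ⟨x, hx1, hx2⟩ := (hev1.and hev2).exists
    have hxlt : x < τ := hx2.2
    have hsl : slope (fun x => (x + κ) ^ 2 * ρ x) τ x =
        ((x + κ) ^ 2 * ρ x - (τ + κ) ^ 2 * ρ τ) / (x - τ) := by
      rw [slope_def_field]
    rw [hsl] at hx1
    have hle := hamax x ⟨hx2.1.le, hx2.2.le⟩
    have hd : (x + κ) ^ 2 * ρ x - (τ + κ) ^ 2 * ρ τ ≤ 0 := by linarith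
    have hxτ : x - τ < 0 := by linarith
    have : 0 ≤ ((x + κ) ^ 2 * ρ x - (τ + κ) ^ 2 * ρ τ) / (x - τ) := by
      apply div_nonneg_of_nonpos hd hxτ.le
    linarith




lemma scale (a σ : ℝ) (hσ : 0 < σ) (c : ℝ) :
    ∫ x : ℝ, vf a (x / σ) * (σ⁻¹ * gaussPdf ((x - c) / σ)) = Bf a (c / σ) := by
  set F : ℝ → ℝ := fun x => vf a (x / σ) * (σ⁻¹ * gaussPdf ((x - c) / σ)) with hF
  have h1 := Measure.integral_comp_mul_left F σ
  have h2 : ∀ x : ℝ, F (σ * x) = σ⁻¹ * (vf a x * gaussPdf (x - c / σ)) := by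
    intro x
    rw [hF]
    simp only
    rw [mul_comm σ x, mul_div_assoc, div_self hσ.ne', mul_one]
    rw [show (x * σ - c) / σ = x - c / σ by rw [sub_div, mul_div_assoc, div_self hσ.ne', mul_one]]
    ring
  simp only [h2] at h1
  rw [integral_const_mul] at h1
  have h3 : |σ⁻¹| = σ⁻¹ := abs_of_pos (inv_pos.2 hσ)
  rw [smul_eq_mul, h3] at h1
  have h4 : (σ:ℝ)⁻¹ ≠ 0 := inv_ne_zero hσ.ne'
  have := mul_left_cancel₀ h4 h1
  rw [← this]
  rfl

lemma Rsq_pos_case (σ a : ℝ) (hσ : 0 < σ) (δH : ℝ → ℝ)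
    (hδH : ∀ x, δH x = Real.exp (2 * a * x / σ) / (Real.exp (2 * a * x / σ) + 1))
    (θe θt : ℝ) (hθt : 0 ≤ θt) :
    Rsq σ δH θe θt = θt ^ 2 * Bf a (θe / σ) := by
  unfold Rsq
  rw [if_pos hθt]
  congr 1
  rw [← scale a σ hσ θe]
  congr 1
  ext x
  congr 1
  rw [hδH x]
  have hE : (0:ℝ) < Real.exp (2 * a * x / σ) := Real.exp_pos _
  have h1 : vf a (x / σ) = (1 / (Real.exp (2 * a * x / σ) + 1)) ^ 2 := by
    unfold vf
    rw [mul_div_assoc]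
  rw [h1]
  have hne : Real.exp (2 * a * x / σ) + 1 ≠ 0 := by positivity
  field_simp
  ring

lemma Rsq_neg_case (σ a : ℝ) (hσ : 0 < σ) (δH : ℝ → ℝ)
    (hδH : ∀ x, δH x = Real.exp (2 * a * x / σ) / (Real.exp (2 * a * x / σ) + 1))
    (θe θt : ℝ) (hθt : θt < 0) :
    Rsq σ δH θe θt = θt ^ 2 * Bf a (-θe / σ) := by
  unfold Rsq
  rw [if_neg (not_le.2 hθt)]
  congr 1
  rw [← scale a σ hσ (-θe)]
  rw [← integral_neg_eq_self
    (fun x => vf a (x / σ) * (σ⁻¹ * gaussPdf ((x - -θe) / σ))) volume]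
  congr 1
  ext x
  have hE : (0:ℝ) < Real.exp (2 * a * x / σ) := Real.exp_pos _
  have step1 : (0 - δH x) ^ 2 = vf a (-x / σ) := by
    rw [hδH x]
    unfold vf
    have h2 : Real.exp (2 * a * (-x / σ)) = (Real.exp (2 * a * x / σ))⁻¹ := by
      rw [← Real.exp_neg]
      congr 1
      ring
    rw [h2]
    have hne : Real.exp (2 * a * x / σ) + 1 ≠ 0 := by positivity
    have hne2 : (Real.exp (2 * a * x / σ))⁻¹ + 1 ≠ 0 := by positivity
    field_simp
    ring
  have step2 : gaussPdf ((-x - -θe) / σ) = gaussPdf ((x - θe) / σ) := by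
    rw [show (-x - -θe) / σ = -((x - θe) / σ) by ring, gaussPdf_neg]
  rw [show -x / σ = (-x) / σ by ring] at step1
  rw [step2, step1]


end Stmt10

open Stmt10

/-- The worst-case mean square regret of δ_H* over the full two-dimensional parameter
space Θ is bounded by σ²(a* + k/σ)²ρ(a*). -/
theorem stmt_10 (σ k τstar astar : ℝ) (hσ : 0 < σ) (hk : 0 < k)
    (hτ0 : 0 ≤ τstar)
    (hτmax : ∀ τ : ℝ, 0 ≤ τ → τ ^ 2 * ρ τ ≤ τstar ^ 2 * ρ τstar)
    (ha : astar ∈ Set.Icc 0 τstar)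
    (hamax : ∀ a ∈ Set.Icc 0 τstar,
      (a + k / σ) ^ 2 * ρ a ≤ (astar + k / σ) ^ 2 * ρ astar)
    (δH : ℝ → ℝ)
    (hδH : ∀ x, δH x =
      Real.exp (2 * astar * x / σ) / (Real.exp (2 * astar * x / σ) + 1)) :
    (⨆ p : Θset k, Rsq σ δH p.1.1 p.1.2) ≤ σ ^ 2 * (astar + k / σ) ^ 2 * ρ astar := by
  have hρa : 0 < ρ astar := by rw [rho_eq]; exact Bf_pos astar astar
  have hRHS : 0 ≤ σ ^ 2 * (astar + k / σ) ^ 2 * ρ astar := by positivity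
  rcases eq_or_lt_of_le ha.1 with hA0 | hapos
  · -- degenerate case astar = 0 : the rule is constant 1/2 and the sup is unbounded
    rw [iSup_of_not_bddAbove, ] 
    · exact hRHS
    rintro ⟨M, hM⟩
    set t : ℝ := 2 * Real.sqrt (|M| + 1) with ht
    have ht0 : 0 ≤ t := by positivity
    have hmem : ((t, t) : ℝ × ℝ) ∈ Θset k := ⟨by simp; linarith, by simp; linarith⟩
    have hval : Rsq σ δH t t = t ^ 2 * Bf astar (t / σ) :=
      Rsq_pos_case σ astar hσ δH hδH t t ht0
    have hBf : Bf astar (t / σ) = 1 / 4 := by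
      rw [← hA0]
      unfold Bf vf
      have : ∀ y : ℝ, (1 / (Real.exp (2 * 0 * y) + 1)) ^ 2 * gaussPdf (y - t / σ)
          = (1/4) * gaussPdf (y - t / σ) := by
        intro y
        norm_num
      simp only [this]
      rw [integral_const_mul, integral_gauss_shift]
      norm_num
    have ht2 : t ^ 2 = 4 * (|M| + 1) := by
      rw [ht, mul_pow, sq_sqrt (by positivity)]
      ring
    have hRval : Rsq σ δH t t = |M| + 1 := by
      rw [hval, hBf, ht2]; ring
    have hin : Rsq σ δH t t ∈ Set.range (fun p : Θset k => Rsq σ δH p.1.1 p.1.2) :=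
      ⟨⟨(t, t), hmem⟩, rfl⟩
    have := hM hin
    rw [hRval] at this
    have := le_abs_self M
    linarith
  · -- main case
    set κ := k / σ with hκdef
    have hκ : 0 < κ := by positivity
    have hd0 := foc hκ hτ0 hτmax ha hamax hapos
    apply Real.iSup_le _ hRHS
    rintro ⟨⟨θe, θt⟩, hmem, hmem2⟩
    simp only
    rcases le_or_gt 0 θt with hθt | hθt
    · rw [Rsq_pos_case σ astar hσ δH hδH θe θt hθt]
      rcases eq_or_lt_of_le hθt with h0 | h0
      · rw [← h0]
        simpa using hRHS
      set t : ℝ := θt / σ with htdef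
      have htpos : 0 < t := by positivity
      have hbound : t - κ ≤ θe / σ := by
        rw [htdef, hκdef, ← sub_div]
        have h4 : θt - k ≤ θe := by linarith
        gcongr
      have h1 : Bf astar (θe / σ) ≤ Bf astar (t - κ) := Bf_mono hapos.le hbound
      have h2 := Gmax hapos hκ hd0 (s := t - κ) (by linarith)
      have h3 : θt ^ 2 = σ ^ 2 * t ^ 2 := by
        rw [htdef]; field_simp
      calc θt ^ 2 * Bf astar (θe / σ) ≤ θt ^ 2 * Bf astar (t - κ) := by
            apply mul_le_mul_of_nonneg_left h1 (by positivity)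
        _ = σ ^ 2 * ((t - κ + κ) ^ 2 * Bf astar (t - κ)) := by rw [h3]; ring
        _ ≤ σ ^ 2 * ((astar + κ) ^ 2 * Bf astar astar) := by
            apply mul_le_mul_of_nonneg_left h2 (by positivity)
        _ = σ ^ 2 * (astar + k / σ) ^ 2 * ρ astar := by rw [rho_eq]; ring
    · rw [Rsq_neg_case σ astar hσ δH hδH θe θt hθt]
      set t : ℝ := -θt / σ with htdef
      have htpos : 0 < t := div_pos (by linarith) hσ
      have hbound : t - κ ≤ -θe / σ := by
        rw [htdef, hκdef, ← sub_div]
        have h4 : -θt - k ≤ -θe := by linarith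
        gcongr
      have h1 : Bf astar (-θe / σ) ≤ Bf astar (t - κ) := Bf_mono hapos.le hbound
      have h2 := Gmax hapos hκ hd0 (s := t - κ) (by linarith)
      have h3 : θt ^ 2 = σ ^ 2 * t ^ 2 := by
        rw [htdef]; field_simp
      calc θt ^ 2 * Bf astar (-θe / σ) ≤ θt ^ 2 * Bf astar (t - κ) := by
            apply mul_le_mul_of_nonneg_left h1 (by positivity)
        _ = σ ^ 2 * ((t - κ + κ) ^ 2 * Bf astar (t - κ)) := by rw [h3]; ring
        _ ≤ σ ^ 2 * ((astar + κ) ^ 2 * Bf astar astar) := by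
            apply mul_le_mul_of_nonneg_left h2 (by positivity)
        _ = σ ^ 2 * (astar + k / σ) ^ 2 * ρ astar := by rw [rho_eq]; ring
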